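/- Let p be an odd prime and r ≥ 1. The number of residues t ∈ Z/p^rZ such that t² − 4 is a quadratic non-residue modulo p equals p^{r−1}(p−1)/2. -/

import Mathlib

open Finset

lemma myTwoNeZero (p : ℕ) [Fact p.Prime] (hp : Odd p) : (2 : ZMod p) ≠ 0 := by
  have hp2 : p ≠ 2 := by rintro rfl; exact (by decide : ¬ Odd 2) hp
  have h : ((2 : ℕ) : ZMod p) ≠ 0 := by
    rw [Ne, ZMod.natCast_eq_zero_iff]
    intro h
    exact hp2 ((Nat.prime_dvd_prime_iff_eq Fact.out Nat.prime_two).mp h)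
  simpa using h

lemma ringchar_ne_two (p : ℕ) [Fact p.Prime] (hp : Odd p) : ringChar (ZMod p) ≠ 2 := by
  rw [ZMod.ringChar_zmod_n]
  rintro rfl; exact (by decide : ¬ Odd 2) hp

lemma sum_chi (p : ℕ) [Fact p.Prime] (hp : Odd p) :
    ∑ t : ZMod p, quadraticChar (ZMod p) (t ^ 2 - 4) = -1 := by
  have h2 : (2 : ZMod p) ≠ 0 := myTwoNeZero p hp
  have h4 : (4 : ZMod p) ≠ 0 := by
    have : (4 : ZMod p) = 2 * 2 := by norm_num
    rw [this]; exact mul_ne_zero h2 h2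
  set χ := quadraticChar (ZMod p) with hχ
  have step1 : ∑ t : ZMod p, χ (t ^ 2 - 4) = ∑ u : ZMod p, χ (u * (u + 4)) := by
    refine (Fintype.sum_equiv (Equiv.addRight (2 : ZMod p)) _ _ fun u => ?_).symm
    simp only [Equiv.coe_addRight]
    ring_nf
  rw [step1]
  rw [← Finset.sum_erase_add _ _ (mem_univ (0 : ZMod p))]
  have h0 : χ (0 * (0 + 4)) = 0 := by norm_num [hχ]
  rw [h0, add_zero]
  have step2 : ∑ u ∈ univ.erase (0 : ZMod p), χ (u * (u + 4))
      = ∑ v ∈ univ.erase (1 : ZMod p), χ v := by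
    refine Finset.sum_nbij' (fun u => 1 + 4 * u⁻¹) (fun v => 4 * (v - 1)⁻¹) ?_ ?_ ?_ ?_ ?_
    · intro u hu
      have hu0 : u ≠ 0 := (mem_erase.mp hu).1
      refine mem_erase.mpr ⟨?_, mem_univ _⟩
      intro h
      have : 4 * u⁻¹ = 0 := by linear_combination h
      rcases mul_eq_zero.mp this with h' | h'
      · exact h4 h'
      · exact hu0 (inv_eq_zero.mp h')
    · intro v hv
      have hv1 : v ≠ 1 := (mem_erase.mp hv).1
      refine mem_erase.mpr ⟨?_, mem_univ _⟩
      intro h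
      rcases mul_eq_zero.mp h with h' | h'
      · exact h4 h'
      · exact hv1 (by have := inv_eq_zero.mp h'; linear_combination this)
    · intro u hu
      have hu0 : u ≠ 0 := (mem_erase.mp hu).1
      field_simp
      rw [show u + 4 - u = 4 by ring]; exact div_self h4
    · intro v hv
      have hv1 : v ≠ 1 := (mem_erase.mp hv).1
      have : v - 1 ≠ 0 := sub_ne_zero.mpr hv1
      field_simp
      ring
    · intro u hu
      have hu0 : u ≠ 0 := (mem_erase.mp hu).1
      have : u * (u + 4) = u ^ 2 * (1 + 4 * u⁻¹) := by field_simp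
      rw [this, map_mul, quadraticChar_sq_one' hu0, one_mul]
  rw [step2]
  have := quadraticChar_sum_zero (ringchar_ne_two p hp)
  rw [← Finset.sum_erase_add _ _ (mem_univ (1 : ZMod p))] at this
  simpa [hχ] using this

lemma card_zmod (p : ℕ) [Fact p.Prime] (hp : Odd p) :
    (univ.filter fun t : ZMod p =>
      quadraticChar (ZMod p) (t ^ 2 - 4) = -1).card * 2 = p - 1 := by
  have h2 : (2 : ZMod p) ≠ 0 := myTwoNeZero p hp
  set χ := quadraticChar (ZMod p) with hχ
  set A := univ.filter fun t : ZMod p => χ (t ^ 2 - 4) = 1 with hA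
  set B := univ.filter fun t : ZMod p => χ (t ^ 2 - 4) = -1 with hB
  -- card of zeros
  have hC : (univ.filter fun t : ZMod p => t ^ 2 - 4 = 0).card = 2 := by
    have : (univ.filter fun t : ZMod p => t ^ 2 - 4 = 0) = {2, -2} := by
      ext t
      simp only [mem_filter, mem_univ, true_and, mem_insert, mem_singleton]
      constructor
      · intro h
        have : (t - 2) * (t + 2) = 0 := by linear_combination h
        rcases mul_eq_zero.mp this with h' | h'
        · left; linear_combination h'
        · right; linear_combination h'
      · rintro (rfl | rfl) <;> ring
    rw [this]
    rw [card_insert_of_notMem, card_singleton]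
    simp only [mem_singleton]
    intro h
    have : (2 : ZMod p) + 2 = 0 := by linear_combination h
    have h4 : (4 : ZMod p) ≠ 0 := by
      have e : (4 : ZMod p) = 2 * 2 := by norm_num
      rw [e]; exact mul_ne_zero h2 h2
    exact h4 (by linear_combination this)
  -- A + B = p - 2 (as sets, complement of zeros)
  have hAB : A.card + B.card + 2 = p := by
    have hunion : A ∪ B = univ.filter fun t : ZMod p => t ^ 2 - 4 ≠ 0 := by
      ext t
      simp only [hA, hB, mem_union, mem_filter, mem_univ, true_and]
      constructor
      · rintro (h | h) h0 <;> rw [show t ^ 2 - 4 = ((t^2-4 : ZMod p)) from rfl, h0] at h <;>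
          simp [hχ] at h
      · intro h0
        exact quadraticChar_dichotomy h0
    have hdisj : Disjoint A B := by
      rw [Finset.disjoint_left]
      intro t ha hb
      simp only [hA, mem_filter] at ha
      simp only [hB, mem_filter] at hb
      rw [ha.2] at hb; norm_num at hb
    have := Finset.card_filter_add_card_filter_not
      (s := (univ : Finset (ZMod p))) (p := fun t : ZMod p => t ^ 2 - 4 = 0)
    rw [hC, Finset.card_univ, ZMod.card] at this
    have hcard : (univ.filter fun t : ZMod p => ¬(t ^ 2 - 4 = 0)).card + 2 = p := by
      omega
    rw [← Finset.card_union_of_disjoint hdisj, hunion]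
    exact hcard
  -- sum = A - B
  have hsum : (A.card : ℤ) - B.card = -1 := by
    have hs := sum_chi p hp
    rw [show ∑ t : ZMod p, χ (t ^ 2 - 4)
        = ∑ t ∈ A, χ (t^2-4) + ∑ t ∈ univ.filter (fun t : ZMod p => ¬ χ (t^2-4) = 1), χ (t^2-4)
      from (Finset.sum_filter_add_sum_filter_not _ _ _).symm] at hs
    have hA1 : ∑ t ∈ A, χ (t^2-4) = A.card := by
      rw [Finset.sum_congr rfl (fun t ht => (mem_filter.mp ht).2)]
      simp
      rfl
    have hrest : ∑ t ∈ univ.filter (fun t : ZMod p => ¬ χ (t^2-4) = 1), χ (t^2-4)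
        = -B.card := by
      rw [show (univ.filter (fun t : ZMod p => ¬ χ (t^2-4) = 1))
          = B ∪ univ.filter (fun t : ZMod p => ¬ χ (t^2-4) = 1 ∧ ¬ χ (t^2-4) = -1) from ?_]
      · rw [Finset.sum_union ?_]
        · have hBz : ∑ t ∈ B, χ (t^2-4) = -B.card := by
            rw [Finset.sum_congr rfl (fun t ht => (mem_filter.mp ht).2)]
            simp
            rfl
          have hz : ∑ t ∈ univ.filter (fun t : ZMod p => ¬ χ (t^2-4) = 1 ∧ ¬ χ (t^2-4) = -1),
              χ (t^2-4) = 0 := by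
            refine Finset.sum_eq_zero fun t ht => ?_
            have h := (mem_filter.mp ht).2
            by_contra hne
            have h0 : ((t^2-4 : ZMod p)) ≠ 0 := by
              intro h0; rw [h0] at hne; simp [hχ] at hne
            rcases quadraticChar_dichotomy h0 with h' | h'
            · exact h.1 h'
            · exact h.2 h'
          rw [hBz, hz, add_zero]
        · rw [Finset.disjoint_left]
          intro t ht ht'
          exact ((mem_filter.mp ht').2).2 ((mem_filter.mp ht).2)
      · ext t
        simp only [hB, mem_union, mem_filter, mem_univ, true_and]
        constructor
        · intro h
          by_cases hb : χ (t^2-4) = -1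
          · exact Or.inl hb
          · exact Or.inr ⟨h, hb⟩
        · rintro (h | h)
          · rw [h]; norm_num
          · exact h.1
    rw [hA1, hrest] at hs
    linarith [hs]
  omega

theorem stmt_3 (p : ℕ) [Fact p.Prime] (hp : Odd p) (r : ℕ) (hr : 1 ≤ r) :
    ((Finset.range (p ^ r)).filter
        fun t : ℕ => legendreSym p ((t : ℤ) ^ 2 - 4) = -1).card * 2
      = p ^ (r - 1) * (p - 1) := by
  haveI : NeZero p := ⟨(Fact.out : p.Prime).pos.ne'⟩
  have hp0 : 0 < p := (Fact.out : p.Prime).pos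
  have hcast : ∀ t : ℕ, legendreSym p ((t : ℤ) ^ 2 - 4)
      = quadraticChar (ZMod p) ((t : ZMod p) ^ 2 - 4) := by
    intro t
    rw [legendreSym]
    congr 1
    push_cast
    ring
  have hbase : ((Finset.range p).filter
      fun t : ℕ => legendreSym p ((t : ℤ) ^ 2 - 4) = -1).card * 2 = p - 1 := by
    rw [← card_zmod p hp]
    congr 1
    refine Finset.card_nbij' (fun t => (t : ZMod p)) (fun x => x.val) ?_ ?_ ?_ ?_
    · intro t ht
      simp only [Finset.mem_coe, mem_filter, mem_range] at ht ⊢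
      refine ⟨mem_univ _, ?_⟩
      have h := ht.2
      rwa [hcast] at h
    · intro x hx
      simp only [Finset.mem_coe, mem_filter, mem_univ, true_and] at hx
      simp only [Finset.mem_coe, mem_filter, mem_range]
      refine ⟨ZMod.val_lt x, ?_⟩
      rw [hcast, ZMod.natCast_zmod_val]
      exact hx
    · intro t ht
      simp only [Finset.mem_coe, mem_filter, mem_range] at ht
      exact ZMod.val_cast_of_lt ht.1
    · intro x _
      exact ZMod.natCast_zmod_val x
  have hmod : ∀ a b : ℕ, legendreSym p (((a * p + b : ℕ) : ℤ) ^ 2 - 4)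
      = legendreSym p ((b : ℤ) ^ 2 - 4) := by
    intro a b
    rw [hcast, hcast]
    congr 2
    push_cast
    simp [ZMod.natCast_self]
  have hsplit : ((Finset.range (p ^ r)).filter
        fun t : ℕ => legendreSym p ((t : ℤ) ^ 2 - 4) = -1).card
      = p ^ (r - 1) * ((Finset.range p).filter
        fun t : ℕ => legendreSym p ((t : ℤ) ^ 2 - 4) = -1).card := by
    rw [← Finset.card_range (p ^ (r - 1)), ← Finset.card_product]
    have hpr : p ^ r = p ^ (r - 1) * p := by
      rw [← pow_succ, Nat.sub_add_cancel hr]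
    refine Finset.card_nbij' (fun t => (t / p, t % p)) (fun x => x.1 * p + x.2) ?_ ?_ ?_ ?_
    · intro t ht
      simp only [Finset.mem_coe, mem_filter, mem_range] at ht
      simp only [Finset.mem_coe, Finset.mem_product, mem_filter, mem_range]
      have h1 : t / p < p ^ (r - 1) := by
        rw [Nat.div_lt_iff_lt_mul hp0, ← hpr]; exact ht.1
      refine ⟨h1, Nat.mod_lt _ hp0, ?_⟩
      have := ht.2
      rwa [show t = t / p * p + t % p from (Nat.div_add_mod' t p).symm, hmod] at this
    · intro x hx
      simp only [Finset.mem_coe, Finset.mem_product, mem_filter, mem_range] at hx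
      simp only [Finset.mem_coe, mem_filter, mem_range]
      constructor
      · calc x.1 * p + x.2 < (x.1 + 1) * p := by
              have := hx.2.1; nlinarith
          _ ≤ p ^ (r - 1) * p := Nat.mul_le_mul_right _ hx.1
          _ = p ^ r := hpr.symm
      · rw [hmod]; exact hx.2.2
    · intro t ht
      exact Nat.div_add_mod' t p
    · intro x hx
      simp only [Finset.mem_coe, Finset.mem_product, mem_filter, mem_range] at hx
      have hb : x.2 < p := hx.2.1
      have h1 : (x.1 * p + x.2) / p = x.1 := by
        rw [mul_comm, Nat.mul_add_div hp0, Nat.div_eq_of_lt hb, add_zero]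
      have h2 : (x.1 * p + x.2) % p = x.2 := by
        rw [mul_comm, Nat.mul_add_mod, Nat.mod_eq_of_lt hb]
      exact Prod.ext h1 h2
  rw [hsplit, mul_assoc, hbase]
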